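/- Let V ∈ L¹(ℝ³) be real-valued with Fourier transform V̂ ≤ 0 everywhere, V̂(0) < 0, and suppose |·|^{-2} V ∈ L¹(ℝ³). Then ∫_{ℝ³} V(x)/|x|² dx < 0. -/

import Mathlib

open MeasureTheory Real
open scoped FourierTransform RealInnerProductSpace

local notation "E3" => EuclideanSpace ℝ (Fin 3)

lemma aux_gauss_integrable {b : ℝ} (hb : 0 < b) :
    Integrable (fun x : E3 => rexp (-b * ‖x‖ ^ 2)) := by
  have h := (GaussianFourier.integrable_cexp_neg_mul_sq_norm_add (V := E3)
      (b := (b : ℂ)) (by simpa using hb) 0 0).norm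
  refine h.congr (Filter.Eventually.of_forall fun x => ?_)
  simp [Complex.norm_exp]
  exact Or.inl (by rw [← Complex.ofReal_pow, Complex.ofReal_re])

lemma aux_weighted_neg {u : E3 → ℝ} (hu_cont : Continuous u) {C : ℝ} (hu_bd : ∀ x, |u x| ≤ C)
    (hu_nonpos : ∀ x, u x ≤ 0) (hu0 : u 0 < 0) {b : ℝ} (hb : 0 < b) :
    (∫ x : E3, rexp (-b * ‖x‖ ^ 2) * u x) < 0 := by
  set g : E3 → ℝ := fun x => (-u x) * rexp (-b * ‖x‖ ^ 2) with hg
  have hg_int : Integrable g :=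
    (aux_gauss_integrable hb).bdd_mul (hu_cont.neg.aestronglyMeasurable)
      (c := C) (Filter.Eventually.of_forall fun x => by simpa using hu_bd x)
  have hpos : 0 < ∫ x, g x := by
    rw [integral_pos_iff_support_of_nonneg
      (fun x => mul_nonneg (neg_nonneg.2 (hu_nonpos x)) (exp_pos _).le) hg_int]
    have hsub : u ⁻¹' (Set.Iio 0) ⊆ Function.support g := by
      intro x hx
      have hx' : u x < 0 := hx
      exact ne_of_gt (mul_pos (by linarith) (exp_pos _))
    calc (0 : ENNReal) < volume (u ⁻¹' (Set.Iio 0)) :=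
          ((isOpen_Iio.preimage hu_cont).measure_pos volume ⟨0, hu0⟩)
      _ ≤ volume (Function.support g) := measure_mono hsub
  have : (∫ x : E3, rexp (-b * ‖x‖ ^ 2) * u x) = -∫ x, g x := by
    rw [← integral_neg]
    congr 1 with x
    simp [hg]; ring
  rw [this]
  linarith

lemma aux_flip_inner : (innerₗ (EuclideanSpace ℝ (Fin 3))).flip = innerₗ (EuclideanSpace ℝ (Fin 3)) := by
  apply LinearMap.ext; intro x; apply LinearMap.ext; intro y
  exact real_inner_comm x y

lemma aux_I_neg (V : E3 → ℝ) (hV1 : Integrable V (volume : Measure E3))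
    (hneg : ∀ p : E3, (𝓕 (fun x : E3 => (V x : ℂ)) p).im = 0 ∧
      (𝓕 (fun x : E3 => (V x : ℂ)) p).re ≤ 0)
    (h0 : (𝓕 (fun x : E3 => (V x : ℂ)) 0).re < 0) {s : ℝ} (hs : 0 < s) :
    (∫ x : E3, V x * rexp (-s * ‖x‖ ^ 2)) < 0 := by
  set Vc : E3 → ℂ := fun x => (V x : ℂ) with hVc
  have hVc_int : Integrable Vc := hV1.ofReal
  set b : ℝ := π ^ 2 / s with hbdef
  have hb : 0 < b := div_pos (by positivity) hs
  have hbs : b * s = π ^ 2 := by rw [hbdef, div_mul_cancel₀ _ hs.ne']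
  set f : E3 → ℂ := fun v => Complex.exp (-(b:ℂ) * ‖v‖ ^ 2) with hf
  have hf_int : Integrable f := by
    have := GaussianFourier.integrable_cexp_neg_mul_sq_norm_add (V := E3)
      (b := (b : ℂ)) (by simpa using hb) 0 0
    refine this.congr (Filter.Eventually.of_forall fun x => ?_)
    simp [hf]
  -- multiplication formula
  have mult := VectorFourier.integral_fourierIntegral_smul_eq_flip
    (L := innerₗ (EuclideanSpace ℝ (Fin 3))) (μ := (volume : Measure E3))
    (ν := (volume : Measure E3))
    Real.continuous_fourierChar continuous_inner hf_int hVc_int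
  rw [aux_flip_inner] at mult
  have hFrfl : ∀ g : E3 → ℂ, VectorFourier.fourierIntegral Real.fourierChar volume
      (innerₗ (EuclideanSpace ℝ (Fin 3))) g = 𝓕 g := fun _ => rfl
  rw [hFrfl f, hFrfl Vc] at mult
  simp only [smul_eq_mul] at mult
  set c : ℝ := (π / b) ^ ((3:ℝ)/2) with hcdef
  have hcpos : 0 < c := Real.rpow_pos_of_pos (div_pos Real.pi_pos hb) _
  have hFf : ∀ ξ : E3, 𝓕 f ξ = (c : ℂ) * Complex.exp (-(s:ℂ) * ‖ξ‖ ^ 2) := by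
    intro ξ
    rw [hf, fourier_gaussian_innerProductSpace (by simpa using hb) ξ]
    have h1 : ((π : ℂ) / (b : ℂ)) ^ (Module.finrank ℝ E3 / 2 : ℂ) = (c : ℂ) := by
      rw [finrank_euclideanSpace_fin]
      rw [hcdef, ← Complex.ofReal_div]
      rw [Complex.ofReal_cpow (le_of_lt (div_pos Real.pi_pos hb))]
      norm_num
    have h2 : -(π : ℂ) ^ 2 * (‖ξ‖ : ℂ) ^ 2 / (b : ℂ) = -(s : ℂ) * (‖ξ‖ : ℂ) ^ 2 := by
      have hbne : (b : ℂ) ≠ 0 := by exact_mod_cast ne_of_gt hb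
      rw [div_eq_iff hbne]
      have : ((b : ℂ)) * (s : ℂ) = (π : ℂ) ^ 2 := by exact_mod_cast congrArg Complex.ofReal hbs
      linear_combination ((‖ξ‖:ℂ)^2) * this
    rw [h1, h2]
  set K : ℝ := ∫ x : E3, V x * rexp (-s * ‖x‖ ^ 2) with hK
  have hLHS : (∫ ξ : E3, 𝓕 f ξ * Vc ξ) = (c : ℂ) * (K : ℂ) := by
    simp_rw [hFf, mul_assoc]
    rw [integral_const_mul]
    congr 1
    rw [hK]
    rw [show (fun ξ : E3 => Complex.exp (-(s:ℂ) * (‖ξ‖:ℂ) ^ 2) * Vc ξ)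
        = fun ξ : E3 => ((V ξ * rexp (-s * ‖ξ‖ ^ 2) : ℝ) : ℂ) from
      funext fun ξ => by push_cast [Complex.ofReal_exp]; ring]
    exact integral_ofReal
  have hFcont : Continuous (𝓕 Vc) :=
    VectorFourier.fourierIntegral_continuous Real.continuous_fourierChar continuous_inner hVc_int
  have hFbd : ∀ x : E3, ‖𝓕 Vc x‖ ≤ ∫ y : E3, ‖Vc y‖ := fun x =>
    VectorFourier.norm_fourierIntegral_le_integral_norm _ _ _ _ _
  have hRHS_int : Integrable (fun x : E3 => f x * 𝓕 Vc x) := by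
    have := hf_int.bdd_mul hFcont.aestronglyMeasurable (Filter.Eventually.of_forall hFbd)
    exact this.congr (Filter.Eventually.of_forall fun x => mul_comm _ _)
  have hre : c * K = ∫ x : E3, rexp (-b * ‖x‖ ^ 2) * (𝓕 Vc x).re := by
    have := congrArg Complex.re mult
    rw [hLHS] at this
    simp only [Complex.mul_re, Complex.ofReal_re, Complex.ofReal_im, mul_zero, zero_mul,
      sub_zero] at this
    rw [this, ← RCLike.re_to_complex, ← integral_re hRHS_int]
    apply integral_congr_ae
    filter_upwards with x
    rw [hf]
    simp only [RCLike.re_to_complex]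
    have : Complex.exp (-(b:ℂ) * (‖x‖:ℂ) ^ 2) = ((rexp (-b * ‖x‖ ^ 2) : ℝ) : ℂ) := by
      push_cast [Complex.ofReal_exp]; ring_nf
    rw [this, Complex.re_ofReal_mul]
  have hneg' : (∫ x : E3, rexp (-b * ‖x‖ ^ 2) * (𝓕 Vc x).re) < 0 := by
    refine aux_weighted_neg (Complex.continuous_re.comp hFcont)
      (C := ∫ y : E3, ‖Vc y‖) (fun x => ?_) (fun x => (hneg x).2) h0 hb
    exact le_trans (Complex.abs_re_le_norm _) (hFbd x)
  nlinarith [hre ▸ hneg']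


/-- Let `V ∈ L¹(ℝ³)` be real-valued with Fourier transform `V̂ ≤ 0` everywhere (i.e. `V̂` is
real with nonpositive real part), `V̂(0) < 0`, and suppose `|·|⁻² V ∈ L¹(ℝ³)`. Then
`∫ V(x)/|x|² dx < 0`. -/
theorem integral_V_div_normSq_neg (V : EuclideanSpace ℝ (Fin 3) → ℝ)
    (hV1 : Integrable V (volume : Measure (EuclideanSpace ℝ (Fin 3))))
    (hV2 : Integrable (fun x : EuclideanSpace ℝ (Fin 3) => V x / ‖x‖ ^ 2)
      (volume : Measure (EuclideanSpace ℝ (Fin 3))))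
    (hneg : ∀ p : EuclideanSpace ℝ (Fin 3),
      (𝓕 (fun x : EuclideanSpace ℝ (Fin 3) => (V x : ℂ)) p).im = 0 ∧
      (𝓕 (fun x : EuclideanSpace ℝ (Fin 3) => (V x : ℂ)) p).re ≤ 0)
    (h0 : (𝓕 (fun x : EuclideanSpace ℝ (Fin 3) => (V x : ℂ)) 0).re < 0) :
    (∫ x : EuclideanSpace ℝ (Fin 3), V x / ‖x‖ ^ 2) < 0 := by
  set ν : Measure ℝ := volume.restrict (Set.Ioi (0:ℝ)) with hν
  have hexp : ∀ a : ℝ, 0 < a → (∫ t in Set.Ioi (0:ℝ), rexp (-(a * t))) = a⁻¹ := by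
    intro a ha
    have h := integral_comp_mul_left_Ioi (fun u => rexp (-u)) 0 ha
    rw [mul_zero] at h
    rw [h, integral_exp_neg_Ioi, neg_zero, Real.exp_zero, smul_eq_mul, mul_one]
  have haex : ∀ᵐ x : E3 ∂(volume : Measure E3), x ≠ 0 := by
    refine ae_iff.2 ?_
    have hset : {x : E3 | ¬ x ≠ 0} = {(0 : E3)} := by ext x; simp
    rw [hset]
    exact measure_singleton _
  have hFmeas : AEStronglyMeasurable (fun p : E3 × ℝ => V p.1 * rexp (-(‖p.1‖ ^ 2 * p.2)))
      ((volume : Measure E3).prod ν) := by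
    refine (hV1.1.comp_fst).mul (Continuous.aestronglyMeasurable ?_)
    exact (((continuous_fst.norm.pow 2).mul continuous_snd).neg).rexp
  have hint : Integrable (fun p : E3 × ℝ => V p.1 * rexp (-(‖p.1‖ ^ 2 * p.2)))
      ((volume : Measure E3).prod ν) := by
    rw [integrable_prod_iff hFmeas]
    constructor
    · filter_upwards [haex] with x hx
      have h2 : 0 < ‖x‖ ^ 2 := pow_pos (norm_pos_iff.mpr hx) 2
      have := (exp_neg_integrableOn_Ioi 0 h2).const_mul (V x)
      exact this.congr (by filter_upwards with t; rw [neg_mul])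
    · refine hV2.abs.congr ?_
      filter_upwards [haex] with x hx
      have h2 : 0 < ‖x‖ ^ 2 := pow_pos (norm_pos_iff.mpr hx) 2
      have : (∫ t in Set.Ioi (0:ℝ), ‖V x * rexp (-(‖x‖ ^ 2 * t))‖) =
          |V x| * (‖x‖ ^ 2)⁻¹ := by
        rw [← hexp _ h2, ← integral_const_mul]
        congr 1 with t
        rw [norm_mul, Real.norm_eq_abs, Real.norm_eq_abs, abs_of_pos (Real.exp_pos _)]
      rw [hν, this, abs_div, div_eq_mul_inv, abs_of_pos h2]
  have hswap := integral_integral_swap (f := fun (x : E3) (t : ℝ) => V x * rexp (-(‖x‖ ^ 2 * t)))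
      (μ := (volume : Measure E3)) (ν := ν) hint
  have hLHS : (∫ x : E3, ∫ t : ℝ, V x * rexp (-(‖x‖ ^ 2 * t)) ∂ν) =
      ∫ x : E3, V x / ‖x‖ ^ 2 := by
    refine integral_congr_ae ?_
    filter_upwards [haex] with x hx
    have h2 : 0 < ‖x‖ ^ 2 := pow_pos (norm_pos_iff.mpr hx) 2
    rw [hν, integral_const_mul, hexp _ h2, div_eq_mul_inv]
  set g : ℝ → ℝ := fun t => ∫ x : E3, V x * rexp (-(‖x‖ ^ 2 * t)) with hg
  have hgint : Integrable g ν := hint.integral_prod_right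
  have hgneg : ∀ t ∈ Set.Ioi (0:ℝ), g t < 0 := by
    intro t ht
    have h := aux_I_neg V hV1 hneg h0 ht
    have he : (fun x : E3 => V x * rexp (-(‖x‖ ^ 2 * t)))
        = fun x : E3 => V x * rexp (-t * ‖x‖ ^ 2) := by
      funext x; ring_nf
    show (∫ x : E3, V x * rexp (-(‖x‖ ^ 2 * t))) < 0
    rw [he]
    exact h
  rw [← hLHS, hswap]
  rw [← neg_pos, ← integral_neg]
  have hnn : 0 ≤ᵐ[ν] fun t => -g t := by
    rw [hν]
    filter_upwards [ae_restrict_mem measurableSet_Ioi] with t ht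
    simpa using neg_nonneg.mpr (hgneg t ht).le
  rw [integral_pos_iff_support_of_nonneg_ae hnn hgint.neg]
  have hsub : Set.Ioi (0:ℝ) ⊆ Function.support fun t => -g t := by
    intro t ht
    exact Function.mem_support.mpr (ne_of_gt (neg_pos.mpr (hgneg t ht)))
  calc (0 : ENNReal) < ν (Set.Ioi 0) := by
        rw [hν, Measure.restrict_apply' measurableSet_Ioi]
        simp [Real.volume_Ioi]
    _ ≤ ν (Function.support fun t => -g t) := measure_mono hsub
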